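/- (Termination/complexity of Algorithm 1) Each application of Rule 1 or Rule 2 strictly decreases U at some candidate, and U(x) only ever takes values in the finite set {ω°(y,z) + W : y ≠ z ∈ X} ∪ {initial value}; consequently the rule-application loop terminates after at most O(m³) rule applications, where m = |X|. -/

import Mathlib

open scoped Classical

namespace Schulze

def pstr {X : Type} (ω : X → X → WithTop ℤ) : List X → WithTop ℤ
  | a :: b :: l => min (ω a b) (pstr ω (b :: l))
  | _ => ⊤

def IsPath {X : Type} (x y : X) (p : List X) : Prop :=
  p.Nodup ∧ p.head? = some x ∧ p.getLast? = some y

noncomputable def S {X : Type} [Fintype X] [DecidableEq X]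
    (ω : X → X → WithTop ℤ) (x y : X) : WithBot (WithTop ℤ) :=
  (Finset.univ.filter (fun p : {l : List X // l.Nodup} => IsPath x y p.1)).sup
    (fun p => ((pstr ω p.1 : WithTop ℤ) : WithBot (WithTop ℤ)))

def ofInt {X : Type} (ω : X → X → ℤ) : X → X → WithTop ℤ := fun x y => (ω x y : ℤ)

lemma pstr_attained {X : Type} (ω : X → X → WithTop ℤ) :
    ∀ (l : List X) (a b : X), ∃ y z : X, (y, z) ∈ (a :: b :: l).zip (b :: l) ∧
      pstr ω (a :: b :: l) = ω y z := by
  intro l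
  induction l with
  | nil =>
    intro a b
    exact ⟨a, b, by simp, by simp [pstr]⟩
  | cons d l ih =>
    intro a b
    obtain ⟨y, z, hm, he⟩ := ih b d
    rcases min_choice (ω a b) (pstr ω (b :: d :: l)) with h | h
    · exact ⟨a, b, by simp, by rw [show pstr ω (a :: b :: d :: l) =
        min (ω a b) (pstr ω (b :: d :: l)) from rfl, h]⟩
    · refine ⟨y, z, ?_, by rw [show pstr ω (a :: b :: d :: l) =
        min (ω a b) (pstr ω (b :: d :: l)) from rfl, h, he]⟩
      rw [List.zip_cons_cons]
      exact List.mem_cons_of_mem _ hm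

lemma zip_tail_ne {X : Type} :
    ∀ (l : List X), l.Nodup → ∀ y z : X, (y, z) ∈ l.zip l.tail → y ≠ z := by
  intro l
  induction l with
  | nil => intro _ y z h; simp at h
  | cons a l ih =>
    intro hnd y z hm
    cases l with
    | nil => simp at hm
    | cons b l' =>
      rw [List.tail_cons, List.zip_cons_cons, List.mem_cons] at hm
      rcases hm with h | h
      · simp only [Prod.mk.injEq] at h
        obtain ⟨rfl, rfl⟩ := h
        have : y ∉ z :: l' := (List.nodup_cons.mp hnd).1
        intro hab; exact this (hab ▸ List.mem_cons_self)
      · exact ih (List.nodup_cons.mp hnd).2 y z h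

theorem stmt8 {X : Type} [Fintype X] [DecidableEq X]
    (ωo : X → X → ℤ) (W : ℤ) (hW : 0 ≤ W) (c : X)
    (Us : ℕ → X → WithTop ℤ) (N : ℕ)
    (h0c : Us 0 c = ⊤)
    (h0 : ∀ x : X, x ≠ c →
      (∃ y z : X, y ≠ z ∧ Us 0 x = ((ωo y z + W : ℤ) : WithTop ℤ)) ∧
      (∀ y z : X, y ≠ z → ((ωo y z + W : ℤ) : WithTop ℤ) ≤ Us 0 x))
    (hstep : ∀ t, t < N → ∃ x : X, x ≠ c ∧
      (∀ z : X, z ≠ x → Us (t + 1) z = Us t z) ∧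
      ((S (fun y z => min (((ωo y z + W : ℤ) : WithTop ℤ)) (Us t z)) c x
          < ((Us t x : WithBot (WithTop ℤ))) ∧
        ((Us (t + 1) x : WithBot (WithTop ℤ)))
          = S (fun y z => min (((ωo y z + W : ℤ) : WithTop ℤ)) (Us t z)) c x)
       ∨ (∃ y : X, y ≠ c ∧ Us t y < Us t x ∧
            Us t y ≤ ((ωo y x - W : ℤ) : WithTop ℤ) ∧
            Us (t + 1) x = Us t y))) :
    (∀ t, t < N → ∃ x : X, x ≠ c ∧ Us (t + 1) x < Us t x) ∧
    (∀ t, t ≤ N → ∀ x : X, x ≠ c →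
      ∃ y z : X, y ≠ z ∧ Us t x = ((ωo y z + W : ℤ) : WithTop ℤ)) ∧
    N ≤ (Fintype.card X) ^ 3 := by
  -- Part 2 : values stay in the finite set
  have part2 : ∀ t, t ≤ N → ∀ x : X, x ≠ c →
      ∃ y z : X, y ≠ z ∧ Us t x = ((ωo y z + W : ℤ) : WithTop ℤ) := by
    intro t
    induction t with
    | zero => intro _ x hx; exact (h0 x hx).1
    | succ t ih =>
      intro ht x hx
      have htN : t < N := lt_of_lt_of_le (Nat.lt_succ_self t) ht
      have iht := ih (le_of_lt htN)
      obtain ⟨x₀, hx₀c, hother, hrule⟩ := hstep t htN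
      by_cases hxx : x = x₀
      · subst hxx
        rcases hrule with ⟨hlt, heq⟩ | ⟨y, hyc, hylt, hyw, heq⟩
        · -- Rule 1
          set ω' : X → X → WithTop ℤ :=
            fun y z => min (((ωo y z + W : ℤ) : WithTop ℤ)) (Us t z) with hω'
          set s := (Finset.univ.filter
            (fun p : {l : List X // l.Nodup} => IsPath c x p.1)) with hs
          have hSdef : S ω' c x = s.sup
              (fun p => ((pstr ω' p.1 : WithTop ℤ) : WithBot (WithTop ℤ))) := rfl
          have hne : s.Nonempty := by
            by_contra h
            rw [Finset.not_nonempty_iff_eq_empty] at h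
            rw [hSdef, h, Finset.sup_empty] at heq
            exact WithBot.coe_ne_bot heq
          obtain ⟨p, hp, hsup⟩ := Finset.exists_mem_eq_sup s hne
            (fun p => ((pstr ω' p.1 : WithTop ℤ) : WithBot (WithTop ℤ)))
          rw [hSdef, hsup] at heq
          have heq' : Us (t + 1) x = pstr ω' p.1 := by
            exact_mod_cast heq
          obtain ⟨hnd, hhead, hlast⟩ := (Finset.mem_filter.mp hp).2
          have hcx : c ≠ x := fun h => hx h.symm
          -- p.1 has at least two elements
          obtain ⟨a, b, l, hpl⟩ : ∃ a b l, p.1 = a :: b :: l := by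
            match hl : p.1 with
            | [] => rw [hl] at hhead; simp at hhead
            | [a] =>
              rw [hl] at hhead hlast
              simp at hhead hlast
              exact absurd (hhead.symm.trans hlast) hcx
            | a :: b :: l => exact ⟨a, b, l, rfl⟩
          have hac : a = c := by
            rw [hpl] at hhead; simpa using hhead
          obtain ⟨y, z, hmz, hpe⟩ := pstr_attained ω' l a b
          have hyz : y ≠ z := by
            apply zip_tail_ne (a :: b :: l) (hpl ▸ hnd) y z
            simpa using hmz
          have hztail : z ∈ b :: l := (List.of_mem_zip hmz).2
          have hzc : z ≠ c := by
            intro hzc'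
            have : a ∉ b :: l := (List.nodup_cons.mp (hpl ▸ hnd)).1
            exact this (hac ▸ hzc' ▸ hztail)
          rw [hpl, hpe,
            show ω' y z = min (((ωo y z + W : ℤ) : WithTop ℤ)) (Us t z) from rfl] at heq'
          rcases min_choice (((ωo y z + W : ℤ) : WithTop ℤ)) (Us t z) with h | h
          · exact ⟨y, z, hyz, heq'.trans h⟩
          · obtain ⟨y', z', hy'z', he'⟩ := iht z hzc
            exact ⟨y', z', hy'z', (heq'.trans h).trans he'⟩
        · -- Rule 2
          obtain ⟨y', z', hy'z', he'⟩ := iht y hyc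
          exact ⟨y', z', hy'z', by rw [heq]; exact he'⟩
      · rw [hother x hxx]
        exact iht x hx
  -- Part 1 : strict decrease
  have hdec : ∀ t, t < N → ∀ x : X, x ≠ c →
      (∀ z : X, z ≠ x → Us (t + 1) z = Us t z) →
      ((S (fun y z => min (((ωo y z + W : ℤ) : WithTop ℤ)) (Us t z)) c x
          < ((Us t x : WithBot (WithTop ℤ))) ∧
        ((Us (t + 1) x : WithBot (WithTop ℤ)))
          = S (fun y z => min (((ωo y z + W : ℤ) : WithTop ℤ)) (Us t z)) c x)
       ∨ (∃ y : X, y ≠ c ∧ Us t y < Us t x ∧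
            Us t y ≤ ((ωo y x - W : ℤ) : WithTop ℤ) ∧
            Us (t + 1) x = Us t y)) →
      Us (t + 1) x < Us t x := by
    intro t ht x hxc hother hrule
    rcases hrule with ⟨hlt, heq⟩ | ⟨y, _, hylt, _, heq⟩
    · rw [← heq] at hlt
      exact_mod_cast hlt
    · rw [heq]; exact hylt
  have part1 : ∀ t, t < N → ∃ x : X, x ≠ c ∧ Us (t + 1) x < Us t x := by
    intro t ht
    obtain ⟨x, hxc, hother, hrule⟩ := hstep t ht
    exact ⟨x, hxc, hdec t ht x hxc hother hrule⟩
  refine ⟨part1, part2, ?_⟩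
  -- Part 3 : bound on N
  set V : Finset ℤ := Finset.univ.offDiag.image (fun p : X × X => ωo p.1 p.2 + W) with hV
  set Φ : ℕ → ℕ :=
    fun t => ∑ x : X, (V.filter (fun v => Us t x ≤ ((v : ℤ) : WithTop ℤ))).card with hΦ
  have hmono : ∀ t, t < N → Φ t < Φ (t + 1) := by
    intro t ht
    obtain ⟨x, hxc, hother, hrule⟩ := hstep t ht
    have hxdec : Us (t + 1) x < Us t x := hdec t ht x hxc hother hrule
    have hle : ∀ z : X, Us (t + 1) z ≤ Us t z := by
      intro z
      by_cases h : z = x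
      · subst h; exact le_of_lt hxdec
      · rw [hother z h]
    apply Finset.sum_lt_sum
    · intro i _
      apply Finset.card_le_card
      intro v hv
      rw [Finset.mem_filter] at hv ⊢
      exact ⟨hv.1, le_trans (hle i) hv.2⟩
    · refine ⟨x, Finset.mem_univ x, ?_⟩
      apply Finset.card_lt_card
      constructor
      · intro v hv
        rw [Finset.mem_filter] at hv ⊢
        exact ⟨hv.1, le_trans (hle x) hv.2⟩
      · obtain ⟨y, z, hyz, heqv⟩ := part2 (t + 1) (Nat.succ_le_of_lt ht) x hxc
        intro hsub
        have hmemV : ωo y z + W ∈ V := by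
          rw [hV]
          exact Finset.mem_image.mpr ⟨(y, z),
            Finset.mem_offDiag.mpr ⟨Finset.mem_univ _, Finset.mem_univ _, hyz⟩, rfl⟩
        have h1 : ωo y z + W ∈ V.filter (fun v => Us (t + 1) x ≤ ((v : ℤ) : WithTop ℤ)) :=
          Finset.mem_filter.mpr ⟨hmemV, le_of_eq heqv⟩
        have h2 := Finset.mem_filter.mp (hsub h1)
        rw [← heqv] at h2
        exact absurd h2.2 (not_le_of_gt hxdec)
  have hchain : ∀ t, t ≤ N → Φ 0 + t ≤ Φ t := by
    intro t
    induction t with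
    | zero => intro _; simp
    | succ t ih =>
      intro ht
      have htN : t < N := lt_of_lt_of_le (Nat.lt_succ_self t) ht
      have := hmono t htN
      have := ih (le_of_lt htN)
      omega
  have hNle : N ≤ Φ N := by
    have := hchain N le_rfl
    omega
  have hVcard : V.card ≤ Fintype.card X * Fintype.card X := by
    calc V.card ≤ (Finset.univ.offDiag : Finset (X × X)).card := Finset.card_image_le
      _ = Fintype.card X * Fintype.card X - Fintype.card X := by
          rw [Finset.offDiag_card]; rfl
      _ ≤ Fintype.card X * Fintype.card X := Nat.sub_le _ _
  have hΦN : Φ N ≤ Fintype.card X ^ 3 := by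
    calc Φ N ≤ ∑ _x : X, V.card := by
          apply Finset.sum_le_sum
          intro i _
          exact Finset.card_le_card (Finset.filter_subset _ _)
      _ = Fintype.card X * V.card := by
          rw [Finset.sum_const, smul_eq_mul, Finset.card_univ]
      _ ≤ Fintype.card X * (Fintype.card X * Fintype.card X) :=
          Nat.mul_le_mul_left _ hVcard
      _ = Fintype.card X ^ 3 := by ring
  omega

end Schulze
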